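/- One CNOT does not suffice up to measurement of the first qubit: there exists a two-qubit unitary u ∈ Matrix.unitaryGroup (Fin 2 × Fin 2) ℂ such that for all a, b, c, d, v₀, v₁ ∈ Matrix.unitaryGroup (Fin 2) ℂ, u ≠ (E₀₀ ⊗ v₀ + E₁₁ ⊗ v₁) * (c ⊗ d) * CNOT * (a ⊗ b), where E₀₀, E₁₁ : Matrix (Fin 2) (Fin 2) ℂ are the standard matrix units at positions (0,0) and (1,1) (so E₀₀ ⊗ v₀ + E₁₁ ⊗ v₁ is the general block-diagonal unitary preserving span{|00⟩,|01⟩} and span{|10⟩,|11⟩}). -/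

import Mathlib

open Matrix Kronecker

noncomputable section

def σy : Matrix (Fin 2) (Fin 2) ℂ := !![0, -Complex.I; Complex.I, 0]

def eps (φ : Fin 2 × Fin 2 → ℂ) : ℂ := φ ⬝ᵥ ((σy ⊗ₖ σy).mulVec φ)

def CNOT : Matrix (Fin 2 × Fin 2) (Fin 2 × Fin 2) ℂ :=
  Matrix.of fun p q => if p.1 = q.1 ∧ p.2 = q.1 + q.2 then 1 else 0

def e (i j : Fin 2) : Fin 2 × Fin 2 → ℂ := Pi.single (i, j) 1

def e₀ : Fin 2 × Fin 2 → ℂ := e 0 0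

def Rz (θ : ℝ) : Matrix (Fin 2) (Fin 2) ℂ :=
  !![Complex.exp (Complex.I * θ / 2), 0; 0, Complex.exp (-Complex.I * θ / 2)]

def Rx (θ : ℝ) : Matrix (Fin 2) (Fin 2) ℂ :=
  !![(Real.cos (θ / 2) : ℂ), Complex.I * Real.sin (θ / 2);
     Complex.I * Real.sin (θ / 2), (Real.cos (θ / 2) : ℂ)]

/-! ### Auxiliary material -/

lemma kron_conjT (A B : Matrix (Fin 2) (Fin 2) ℂ) : (A ⊗ₖ B)ᴴ = Aᴴ ⊗ₖ Bᴴ := by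
  ext p q
  simp [conjTranspose_apply, kroneckerMap_apply, mul_comm]

lemma kron_mulVec_prod (p q : Matrix (Fin 2) (Fin 2) ℂ) (x y : Fin 2 → ℂ) :
    (p ⊗ₖ q) *ᵥ (fun r => x r.1 * y r.2) = fun r => (p *ᵥ x) r.1 * (q *ᵥ y) r.2 := by
  funext r
  simp only [mulVec, dotProduct, Fintype.sum_prod_type, kroneckerMap_apply, of_apply]
  rw [Finset.sum_mul_sum]
  congr 1; funext i; congr 1; funext j; ring

lemma sigma_conj (p : Matrix (Fin 2) (Fin 2) ℂ) : pᵀ * σy * p = p.det • σy := by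
  ext i j
  fin_cases i <;> fin_cases j <;>
    simp [σy, Matrix.mul_apply, Fin.sum_univ_two, Matrix.det_fin_two, Matrix.transpose_apply] <;> ring

lemma sigma_kron_symm : (σy ⊗ₖ σy)ᵀ = σy ⊗ₖ σy := by
  rw [← Matrix.kroneckerMap_transpose]
  have h : σyᵀ = (-1 : ℂ) • σy := by
    ext i j; fin_cases i <;> fin_cases j <;> simp [σy]
  rw [h, Matrix.smul_kronecker, Matrix.kronecker_smul, smul_smul]
  norm_num

lemma eps_kron (p q : Matrix (Fin 2) (Fin 2) ℂ) (v : Fin 2 × Fin 2 → ℂ) :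
    eps ((p ⊗ₖ q) *ᵥ v) = p.det * q.det * eps v := by
  unfold eps
  rw [mulVec_mulVec, dotProduct_mulVec, ← vecMul_transpose, vecMul_vecMul]
  have key : (p ⊗ₖ q)ᵀ * ((σy ⊗ₖ σy) * (p ⊗ₖ q)) = (p.det * q.det) • (σy ⊗ₖ σy) := by
    rw [← Matrix.kroneckerMap_transpose, ← mul_assoc, ← Matrix.mul_kronecker_mul,
      ← Matrix.mul_kronecker_mul, sigma_conj, sigma_conj, Matrix.smul_kronecker,
      Matrix.kronecker_smul, smul_smul]
  rw [key]
  have hs : ((p.det * q.det) • (σy ⊗ₖ σy))ᵀ = (p.det * q.det) • (σy ⊗ₖ σy) := by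
    rw [Matrix.transpose_smul, sigma_kron_symm]
  rw [← hs, vecMul_transpose, smul_mulVec, smul_dotProduct, dotProduct_comm,
    smul_eq_mul]

lemma eps_cnot_prod (x y : Fin 2 → ℂ) :
    eps (CNOT *ᵥ (fun r => x r.1 * y r.2)) = 2 * (x 0 * x 1) * (y 1 ^ 2 - y 0 ^ 2) := by
  simp only [eps, CNOT, mulVec, dotProduct, Fintype.sum_prod_type, Fin.sum_univ_two,
    kroneckerMap_apply, of_apply, σy]
  norm_num [Fin.ext_iff]
  simp only [show (((1 + 1 : Fin 2)) : ℕ) = 0 from rfl, one_ne_zero, if_false, if_true]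
  ring

def U : Matrix (Fin 2 × Fin 2) (Fin 2 × Fin 2) ℂ :=
  Matrix.of fun p q =>
    if p = (0,0) ∧ q = (0,0) then 3/5 else
    if p = (0,0) ∧ q = (1,1) then 4/5 else
    if p = (1,1) ∧ q = (0,0) then 4/5 else
    if p = (1,1) ∧ q = (1,1) then -3/5 else
    if p = q then 1 else 0

lemma U_unitary : U ∈ Matrix.unitaryGroup (Fin 2 × Fin 2) ℂ := by
  rw [Matrix.mem_unitaryGroup_iff]
  ext ⟨i,j⟩ ⟨k,l⟩
  fin_cases i <;> fin_cases j <;> fin_cases k <;> fin_cases l <;>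
    simp [Matrix.mul_apply, Fintype.sum_prod_type, Fin.sum_univ_two, U, Matrix.one_apply,
      Prod.ext_iff, Matrix.star_apply] <;> norm_num [Complex.conj_ofNat]

lemma CNOT_conjT : CNOTᴴ = CNOT := by
  ext ⟨i,j⟩ ⟨k,l⟩
  fin_cases i <;> fin_cases j <;> fin_cases k <;> fin_cases l <;>
    simp [CNOT, Matrix.conjTranspose_apply]

lemma V_adj_mulVec (v0 v1 : Matrix (Fin 2) (Fin 2) ℂ) (j : Fin 2) :
    ((Matrix.single (0 : Fin 2) (0 : Fin 2) (1 : ℂ)) ⊗ₖ v0 +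
      (Matrix.single (1 : Fin 2) (1 : Fin 2) (1 : ℂ)) ⊗ₖ v1)ᴴ *ᵥ e 0 j =
    fun r => (Pi.single (0 : Fin 2) (1 : ℂ) : Fin 2 → ℂ) r.1 * (v0ᴴ *ᵥ Pi.single j 1) r.2 := by
  funext r
  obtain ⟨r1, r2⟩ := r
  fin_cases j <;> fin_cases r1 <;> fin_cases r2 <;>
    simp [mulVec, dotProduct, Fintype.sum_prod_type, Fin.sum_univ_two, e, Pi.single_apply,
      conjTranspose_apply, Matrix.add_apply, kroneckerMap_apply,
      Matrix.single, Prod.ext_iff]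

lemma eps_U0 : eps (Uᴴ *ᵥ e 0 0) = -24/25 := by
  have hU : Uᴴ *ᵥ e 0 0 = fun p => U p (0,0) := by
    funext p
    simp [mulVec, dotProduct, Fintype.sum_prod_type, Fin.sum_univ_two, e, Pi.single_apply,
      conjTranspose_apply, Prod.ext_iff, U, Matrix.star_apply]
    obtain ⟨p1, p2⟩ := p
    fin_cases p1 <;> fin_cases p2 <;> norm_num [U, Complex.conj_ofNat]
  rw [hU]
  simp [eps, dotProduct, mulVec, Fintype.sum_prod_type, Fin.sum_univ_two, kroneckerMap_apply,
    σy, U, Prod.ext_iff]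
  norm_num

lemma eps_U1 : eps (Uᴴ *ᵥ e 0 1) = 0 := by
  have hU : Uᴴ *ᵥ e 0 1 = fun p => U p (0,1) := by
    funext p
    simp [mulVec, dotProduct, Fintype.sum_prod_type, Fin.sum_univ_two, e, Pi.single_apply,
      conjTranspose_apply, Prod.ext_iff, U, Matrix.star_apply]
    obtain ⟨p1, p2⟩ := p
    fin_cases p1 <;> fin_cases p2 <;> norm_num [U, Complex.conj_ofNat]
  rw [hU]
  simp [eps, dotProduct, mulVec, Fintype.sum_prod_type, Fin.sum_univ_two, kroneckerMap_apply,
    σy, U, Prod.ext_iff]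

lemma unitary_facts (w : Matrix (Fin 2) (Fin 2) ℂ) (hw : w ∈ Matrix.unitaryGroup (Fin 2) ℂ) :
    w.det ≠ 0 ∧ w 0 1 = -w.det * star (w 1 0) ∧ w 1 1 = w.det * star (w 0 0) := by
  have h1 : star w * w = 1 := (Unitary.mem_iff.mp hw).1
  have hdet : star w.det * w.det = 1 := by
    have h2 := congrArg Matrix.det h1
    rwa [Matrix.det_mul, Matrix.det_one, Matrix.star_eq_conjTranspose,
      Matrix.det_conjTranspose] at h2
  have hdne : w.det ≠ 0 := by
    intro h0; rw [h0, mul_zero] at hdet; exact one_ne_zero hdet.symm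
  have hinv : w⁻¹ = star w := Matrix.inv_eq_left_inv h1
  have hadj : star w = Ring.inverse w.det • w.adjugate := by rw [← hinv, Matrix.inv_def]
  have hRi : Ring.inverse w.det = w.det⁻¹ := Ring.inverse_eq_inv w.det
  have h01 : star (w 1 0) = w.det⁻¹ * (-w 0 1) := by
    have h3 := congrFun (congrFun hadj 0) 1
    simpa [Matrix.adjugate_fin_two, Matrix.star_eq_conjTranspose,
      Matrix.conjTranspose_apply, Matrix.smul_apply, hRi, smul_eq_mul] using h3
  have h11 : star (w 1 1) = w.det⁻¹ * w 0 0 := by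
    have h3 := congrFun (congrFun hadj 1) 1
    simpa [Matrix.adjugate_fin_two, Matrix.star_eq_conjTranspose,
      Matrix.conjTranspose_apply, Matrix.smul_apply, hRi, smul_eq_mul] using h3
  refine ⟨hdne, ?_, ?_⟩
  · rw [h01]; field_simp
  · have h4 : w 0 0 = w.det * star (w 1 1) := by
      rw [h11]; field_simp
    have h5 := congrArg star h4
    rw [star_mul', star_star] at h5
    have hsd : star w.det = w.det⁻¹ := by
      field_simp
      simpa [Complex.star_def, mul_comm] using hdet
    rw [hsd] at h5
    rw [h5]; field_simp

lemma det_conjT_ne (a : Matrix (Fin 2) (Fin 2) ℂ) (ha : a ∈ Matrix.unitaryGroup (Fin 2) ℂ) :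
    aᴴ.det ≠ 0 := by
  have h := (unitary_facts a ha).1
  rw [Matrix.det_conjTranspose]
  exact star_ne_zero.mpr h

theorem one_cnot_insufficient_first_qubit_measurement :
    ∃ u ∈ Matrix.unitaryGroup (Fin 2 × Fin 2) ℂ,
      ∀ a ∈ Matrix.unitaryGroup (Fin 2) ℂ, ∀ b ∈ Matrix.unitaryGroup (Fin 2) ℂ,
        ∀ c ∈ Matrix.unitaryGroup (Fin 2) ℂ, ∀ d ∈ Matrix.unitaryGroup (Fin 2) ℂ,
          ∀ v₀ ∈ Matrix.unitaryGroup (Fin 2) ℂ, ∀ v₁ ∈ Matrix.unitaryGroup (Fin 2) ℂ,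
            u ≠ (Matrix.single (0 : Fin 2) (0 : Fin 2) (1 : ℂ) ⊗ₖ v₀ +
                  Matrix.single (1 : Fin 2) (1 : Fin 2) (1 : ℂ) ⊗ₖ v₁) *
                (c ⊗ₖ d) * CNOT * (a ⊗ₖ b) := by
  refine ⟨U, U_unitary, ?_⟩
  intro a ha b hb c hc d hd v₀ hv₀ v₁ hv₁ h
  set w : Matrix (Fin 2) (Fin 2) ℂ := dᴴ * v₀ᴴ with hw_def
  have hw : w ∈ Matrix.unitaryGroup (Fin 2) ℂ := by
    rw [hw_def, ← Matrix.star_eq_conjTranspose, ← Matrix.star_eq_conjTranspose]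
    exact mul_mem (Unitary.star_mem hd) (Unitary.star_mem hv₀)
  -- the key formula for the eps of columns
  have key : ∀ j : Fin 2, eps (Uᴴ *ᵥ e 0 j) =
      aᴴ.det * bᴴ.det *
        (2 * ((fun i => cᴴ i 0) 0 * (fun i => cᴴ i 0) 1) *
          ((fun i => w i j) 1 ^ 2 - (fun i => w i j) 0 ^ 2)) := by
    intro j
    have hvec : Uᴴ *ᵥ e 0 j =
        (aᴴ ⊗ₖ bᴴ) *ᵥ (CNOT *ᵥ (fun r => (fun i => cᴴ i 0) r.1 * (fun i => w i j) r.2)) := by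
      rw [h, conjTranspose_mul, conjTranspose_mul, conjTranspose_mul, CNOT_conjT,
        kron_conjT a b, kron_conjT c d]
      rw [← mulVec_mulVec, ← mulVec_mulVec, ← mulVec_mulVec, V_adj_mulVec, kron_mulVec_prod]
      have hxy : (fun r : Fin 2 × Fin 2 =>
            (cᴴ *ᵥ (Pi.single (0 : Fin 2) (1 : ℂ) : Fin 2 → ℂ)) r.1 *
              (dᴴ *ᵥ (v₀ᴴ *ᵥ (Pi.single j (1 : ℂ) : Fin 2 → ℂ))) r.2) =
          fun r : Fin 2 × Fin 2 => (fun i => cᴴ i 0) r.1 * (fun i => w i j) r.2 := by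
        funext r
        rw [mulVec_mulVec, ← hw_def]
        simp [Matrix.mulVec_single]
      rw [hxy]
    rw [hvec, eps_kron, eps_cnot_prod (fun i => cᴴ i 0) (fun i => w i j)]
  have h0 := key 0
  have h1 := key 1
  rw [eps_U0] at h0
  rw [eps_U1] at h1
  simp only at h0 h1
  obtain ⟨hΔne, hw01, hw11⟩ := unitary_facts w hw
  have hane := det_conjT_ne a ha
  have hbne := det_conjT_ne b hb
  -- abbreviations
  set K : ℂ := cᴴ 0 0 * cᴴ 1 0 with hK
  set T : ℂ := w 1 0 ^ 2 - w 0 0 ^ 2 with hT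
  have hKTne : K ≠ 0 ∧ T ≠ 0 := by
    constructor <;> intro h' <;> rw [h'] at h0 <;> norm_num at h0
  have h1' : w 1 1 ^ 2 - w 0 1 ^ 2 = -(w.det ^ 2) * star T := by
    rw [hw01, hw11, hT]
    push_cast [Complex.star_def, map_sub, map_pow]
    ring
  rw [h1'] at h1
  have : aᴴ.det * bᴴ.det * (2 * K * (-(w.det ^ 2) * star T)) ≠ 0 := by
    apply mul_ne_zero (mul_ne_zero hane hbne)
    apply mul_ne_zero (mul_ne_zero two_ne_zero hKTne.1)
    apply mul_ne_zero
    · simpa using pow_ne_zero 2 hΔne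
    · exact star_ne_zero.mpr hKTne.2
  exact this h1.symm
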